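/- Let λ > 0 and X ∈ ℝ^{m×n}. Let U_𝓘 ∈ ℝ^{m×ℓ} (ℓ ≤ k) have orthonormal columns that are eigenvectors of XXᵀ with eigenvalues exceeding λ, i.e. U_𝓘ᵀU_𝓘 = I_ℓ and XXᵀU_𝓘 = U_𝓘Λ_𝓘 with Λ_𝓘 ∈ ℝ^{ℓ×ℓ} diagonal and every diagonal entry of Λ_𝓘 strictly greater than λ. Let O ∈ ℝ^{k×ℓ} satisfy OᵀO = I_ℓ, and set W₂ = U_𝓘 (I_ℓ − λΛ_𝓘⁻¹)^{1/2} Oᵀ and W₁ = W₂ᵀ. Then (W₁, W₂) is a critical point of the sum loss L_σ: it satisfies W₂ᵀ(W₂W₁ − I_m)XXᵀ + λW₁ = 0 and (W₂W₁ − I_m)XXᵀW₁ᵀ + λW₂ = 0. -/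

import Mathlib

open Matrix

/-- For `U_𝓘` with orthonormal eigenvector columns of `XXᵀ` whose eigenvalues
all exceed `λ`, and `O` with orthonormal columns, the pair
`W₂ = U_𝓘 (I − λΛ_𝓘⁻¹)^{1/2} Oᵀ`, `W₁ = W₂ᵀ` is a critical point of the
sum loss `L_σ`. -/
theorem sum_critical_construction {m n k l : ℕ} (hlk : l ≤ k)
    (lam : ℝ) (hlam : 0 < lam)
    (X : Matrix (Fin m) (Fin n) ℝ)
    (UI : Matrix (Fin m) (Fin l) ℝ) (lamI : Fin l → ℝ)
    (hUI : UIᵀ * UI = 1)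
    (hEig : X * Xᵀ * UI = UI * Matrix.diagonal lamI)
    (hgt : ∀ i, lam < lamI i)
    (O : Matrix (Fin k) (Fin l) ℝ) (hO : Oᵀ * O = 1)
    (W1 : Matrix (Fin k) (Fin m) ℝ) (W2 : Matrix (Fin m) (Fin k) ℝ)
    (hW2 : W2 = UI * Matrix.diagonal (fun i => Real.sqrt (1 - lam / lamI i)) * Oᵀ)
    (hW1 : W1 = W2ᵀ) :
    W2ᵀ * (W2 * W1 - 1) * (X * Xᵀ) + lam • W1 = 0 ∧
      (W2 * W1 - 1) * (X * Xᵀ) * W1ᵀ + lam • W2 = 0 := by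
  have hlamI : ∀ i, (0:ℝ) < lamI i := fun i => hlam.trans (hgt i)
  set s : Fin l → ℝ := fun i => Real.sqrt (1 - lam / lamI i) with hs
  set D : Matrix (Fin l) (Fin l) ℝ := Matrix.diagonal s with hD
  set L : Matrix (Fin l) (Fin l) ℝ := Matrix.diagonal lamI with hL
  have hsq : D * D = Matrix.diagonal (fun i => 1 - lam / lamI i) := by
    rw [hD, Matrix.diagonal_mul_diagonal]
    ext i j
    rcases eq_or_ne i j with h | h
    · subst h
      simp only [Matrix.diagonal_apply_eq]
      exact Real.mul_self_sqrt (by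
        rw [sub_nonneg, div_le_one (hlamI i)]
        exact (hgt i).le)
    · simp [Matrix.diagonal_apply_ne _ h]
  have hDT : Dᵀ = D := Matrix.diagonal_transpose s
  have hLT : Lᵀ = L := Matrix.diagonal_transpose lamI
  set A : Matrix (Fin m) (Fin m) ℝ := X * Xᵀ with hA
  have hAsym : Aᵀ = A := by rw [hA, Matrix.transpose_mul, Matrix.transpose_transpose]
  have hEigT : UIᵀ * A = L * UIᵀ := by
    have h := congrArg Matrix.transpose hEig
    simp only [Matrix.transpose_mul] at h
    rw [hAsym, hLT] at h
    exact h
  have hW2T : W2ᵀ = O * D * UIᵀ := by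
    rw [hW2]
    simp [Matrix.transpose_mul, hDT, Matrix.mul_assoc]
  have hProd : W2 * W2ᵀ = UI * (D * D) * UIᵀ := by
    rw [hW2T, hW2]
    simp only [Matrix.mul_assoc]
    rw [← Matrix.mul_assoc Oᵀ O, hO, Matrix.one_mul]
  have hkey1 : D * (D * D) * L - D * L + lam • D = 0 := by
    rw [hsq, hD, hL, Matrix.diagonal_mul_diagonal, Matrix.diagonal_mul_diagonal,
      Matrix.diagonal_mul_diagonal]
    ext i j
    rcases eq_or_ne i j with h | h
    · subst h
      simp only [Matrix.add_apply, Matrix.sub_apply, Matrix.smul_apply,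
        Matrix.diagonal_apply_eq, Matrix.zero_apply, smul_eq_mul]
      have hne : lamI i ≠ 0 := (hlamI i).ne'
      field_simp
      ring
    · simp [Matrix.diagonal_apply_ne _ h]
  have hkey2 : D * D * L * D - L * D + lam • D = 0 := by
    rw [hsq, hD, hL, Matrix.diagonal_mul_diagonal, Matrix.diagonal_mul_diagonal,
      Matrix.diagonal_mul_diagonal]
    ext i j
    rcases eq_or_ne i j with h | h
    · subst h
      simp only [Matrix.add_apply, Matrix.sub_apply, Matrix.smul_apply,
        Matrix.diagonal_apply_eq, Matrix.zero_apply, smul_eq_mul]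
      have hne : lamI i ≠ 0 := (hlamI i).ne'
      field_simp
      ring
    · simp [Matrix.diagonal_apply_ne _ h]
  subst hW1
  constructor
  · -- first equation
    have h1 : O * ((D * (D * D) * L - D * L + lam • D) * UIᵀ) = 0 := by
      rw [hkey1]; simp
    rw [Matrix.mul_sub, Matrix.mul_one, Matrix.sub_mul, hProd, hW2T]
    simp only [Matrix.add_mul, Matrix.sub_mul, Matrix.mul_add, Matrix.mul_sub,
      Matrix.smul_mul, Matrix.mul_smul, Matrix.mul_assoc] at h1 ⊢
    rw [← Matrix.mul_assoc UIᵀ UI, hUI, Matrix.one_mul, hEigT]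
    convert h1 using 2
  · -- second equation
    have h2 : UI * ((D * D * L * D - L * D + lam • D) * Oᵀ) = 0 := by
      rw [hkey2]; simp
    rw [Matrix.transpose_transpose, Matrix.sub_mul, Matrix.one_mul, Matrix.sub_mul,
      hProd, hW2]
    have hAW2 : A * (UI * D * Oᵀ) = UI * L * D * Oᵀ := by
      rw [← Matrix.mul_assoc, ← Matrix.mul_assoc, hEig]
    simp only [Matrix.add_mul, Matrix.sub_mul, Matrix.mul_add, Matrix.mul_sub,
      Matrix.smul_mul, Matrix.mul_smul, Matrix.mul_assoc] at h2 hAW2 ⊢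
    rw [hAW2]
    rw [← Matrix.mul_assoc UIᵀ UI, hUI, Matrix.one_mul]
    convert h2 using 2
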